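/- arXiv:2509.22219 — 6 statements merged into one kernel-verified Lean document; each statement's English description precedes it below -/
import Mathlib

section
/- Let n = 2M, A ∈ SO(n), λ ∈ ℝᴹ, and B = Aᵀ(⊕ᵢ λᵢ J)A. Let x ∈ ℝⁿ, v = Ax with blocks v₁, …, v_M ∈ ℝ², assume v₁ ≠ 0, and let t₀ ∈ ℝ satisfy R(t₀λ₁)e₁ = v₁/‖v₁‖₂. Then exp(−t₀B)·x = Aᵀ(‖v₁‖₂ e₁ ⊕ R(−t₀λ₂)v₂ ⊕ ⋯ ⊕ R(−t₀λ_M)v_M); in particular the point Aᵀ · invRep(x; t₀) lies on the orbit {exp(tB)x : t ∈ ℝ} of x. -/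
open Matrix NormedSpace

noncomputable section

/-- `R(t)`: the 2×2 rotation matrix. -/
def R2 (t : ℝ) : Matrix (Fin 2) (Fin 2) ℝ :=
  !![Real.cos t, -Real.sin t; Real.sin t, Real.cos t]

/-- `J`: the 2×2 matrix with rows (0, -1) and (1, 0). -/
def Jmat : Matrix (Fin 2) (Fin 2) ℝ := !![0, -1; 1, 0]

/-- Index type for `ℝⁿ` with `n = 2M`: component `2(i-1)+p` of block `i` is indexed `(p, i)`. -/
abbrev Idx (M : ℕ) := Fin 2 × Fin M

/-- `SO(n)` for `n = 2M`, on the block index type. -/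
def SOb (M : ℕ) : Set (Matrix (Idx M) (Idx M) ℝ) :=
  {A | Aᵀ * A = 1 ∧ A.det = 1}

/-- The block-diagonal matrix `⊕ᵢ Cᵢ`. -/
def bdiag {M : ℕ} (C : Fin M → Matrix (Fin 2) (Fin 2) ℝ) : Matrix (Idx M) (Idx M) ℝ :=
  Matrix.blockDiagonal C

/-- The `i`-th 2-dimensional block `vᵢ` of a vector `v ∈ ℝⁿ`. -/
def blk {M : ℕ} (v : Idx M → ℝ) (i : Fin M) : Fin 2 → ℝ := fun p => v (p, i)

/-- Concatenation `u₁ ⊕ ⋯ ⊕ u_M` of 2-dimensional blocks. -/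
def cat {M : ℕ} (u : Fin M → (Fin 2 → ℝ)) : Idx M → ℝ := fun pi => u pi.2 pi.1

/-- `e₁ = (1, 0) ∈ ℝ²`. -/
def e1 : Fin 2 → ℝ := ![1, 0]

/-- The Euclidean norm `‖u‖₂` of `u ∈ ℝ²`. -/
def norm2 (u : Fin 2 → ℝ) : ℝ := Real.sqrt (u 0 ^ 2 + u 1 ^ 2)

/-- `t₀` is valid for `x` (w.r.t. `A`, `λ`): `R(t₀λ₁)e₁ = v₁/‖v₁‖₂` where `v = Ax`. -/
def valid {M : ℕ} [NeZero M] (A : Matrix (Idx M) (Idx M) ℝ) (lam : Fin M → ℝ)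
    (x : Idx M → ℝ) (t₀ : ℝ) : Prop :=
  (R2 (t₀ * lam 0)).mulVec e1 = (norm2 (blk (A.mulVec x) 0))⁻¹ • blk (A.mulVec x) 0

/-- `invRep(x; t₀) = ‖v₁‖₂ e₁ ⊕ R(−t₀λ₂)v₂ ⊕ ⋯ ⊕ R(−t₀λ_M)v_M`, where `v = Ax`. -/
def invRep {M : ℕ} [NeZero M] (A : Matrix (Idx M) (Idx M) ℝ) (lam : Fin M → ℝ)
    (x : Idx M → ℝ) (t₀ : ℝ) : Idx M → ℝ :=
  cat (fun i =>
    if i = 0 then norm2 (blk (A.mulVec x) 0) • e1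
    else (R2 (-(t₀ * lam i))).mulVec (blk (A.mulVec x) i))

lemma Jmat_sq : Jmat * Jmat = -1 := by
  ext i j
  fin_cases i <;> fin_cases j <;>
    simp [Jmat, Matrix.mul_apply, Fin.sum_univ_two, Matrix.one_apply]

lemma R2_eq (t : ℝ) : R2 t = Real.cos t • (1 : Matrix (Fin 2) (Fin 2) ℝ) + Real.sin t • Jmat := by
  ext i j
  fin_cases i <;> fin_cases j <;>
    simp [R2, Jmat, Matrix.one_apply]

lemma hasSum_expJ (t : ℝ) :
    HasSum (fun n : ℕ => ((n.factorial : ℝ))⁻¹ • (t • Jmat) ^ n)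
      (Real.cos t • (1 : Matrix (Fin 2) (Fin 2) ℝ) + Real.sin t • Jmat) := by
  have hc := (Real.hasSum_cos t).smul_const (1 : Matrix (Fin 2) (Fin 2) ℝ)
  have hs := (Real.hasSum_sin t).smul_const Jmat
  refine HasSum.even_add_odd ?_ ?_
  · convert hc using 2 with k
    have h1 : (t • Jmat) ^ (2 * k) = t ^ (2 * k) • ((-1 : ℝ) ^ k • 1) := by
      rw [smul_pow]
      congr 1
      rw [pow_mul, sq, Jmat_sq]
      have : (-1 : Matrix (Fin 2) (Fin 2) ℝ) = (-1 : ℝ) • 1 := by simp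
      rw [this, smul_pow, one_pow]
    rw [h1, smul_smul, smul_smul]
    congr 1
    field_simp
  · convert hs using 2 with k
    have h1 : (t • Jmat) ^ (2 * k + 1) = t ^ (2 * k + 1) • ((-1 : ℝ) ^ k • Jmat) := by
      rw [smul_pow]
      congr 1
      rw [pow_succ, pow_mul, sq, Jmat_sq]
      have : (-1 : Matrix (Fin 2) (Fin 2) ℝ) = (-1 : ℝ) • 1 := by simp
      rw [this, smul_pow, one_pow, smul_mul_assoc, one_mul]
    rw [h1, smul_smul, smul_smul]
    congr 1
    field_simp

lemma hasSum_expJ' (t : ℝ) :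
    HasSum (fun n : ℕ => ((n.factorial : ℝ))⁻¹ • (t • Jmat) ^ n) (R2 t) := by
  rw [R2_eq]
  exact hasSum_expJ t

lemma exp_bdiag {M : ℕ} (c : Fin M → ℝ) :
    NormedSpace.exp (bdiag fun i => c i • Jmat) = bdiag fun i => R2 (c i) := by
  unfold bdiag
  rw [exp_eq_tsum (𝕂 := ℝ)]
  have hPi : HasSum (fun n : ℕ => ((n.factorial : ℝ))⁻¹ • (fun i => c i • Jmat) ^ n)
      (fun i => R2 (c i)) := by
    rw [Pi.hasSum]
    intro i
    have : (fun n : ℕ => (((n.factorial : ℝ))⁻¹ • (fun i => c i • Jmat) ^ n) i)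
        = fun n : ℕ => ((n.factorial : ℝ))⁻¹ • (c i • Jmat) ^ n := by
      funext n
      simp [Pi.pow_apply]
    rw [this]
    exact hasSum_expJ' (c i)
  have hsum := hPi.matrix_blockDiagonal
  have heq : ∀ n : ℕ, ((n.factorial : ℝ))⁻¹ • (Matrix.blockDiagonal fun i => c i • Jmat) ^ n
      = Matrix.blockDiagonal (((n.factorial : ℝ))⁻¹ • (fun i => c i • Jmat) ^ n) := by
    intro n
    rw [← Matrix.blockDiagonal_pow, ← Matrix.blockDiagonal_smul]
  simp_rw [heq]
  exact hsum.tsum_eq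

lemma R2_neg_mul_R2 (s : ℝ) : R2 (-s) * R2 s = 1 := by
  ext i j
  fin_cases i <;> fin_cases j <;>
    simp [R2, Matrix.mul_apply, Fin.sum_univ_two, Matrix.one_apply] <;>
    nlinarith [Real.sin_sq_add_cos_sq s]

lemma bdiag_mulVec {M : ℕ} (C : Fin M → Matrix (Fin 2) (Fin 2) ℝ) (v : Idx M → ℝ) :
    (bdiag C).mulVec v = cat (fun i => (C i).mulVec (blk v i)) := by
  funext pi
  obtain ⟨p, i⟩ := pi
  simp only [bdiag, cat, blk, Matrix.mulVec, dotProduct, Matrix.blockDiagonal_apply,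
    Fintype.sum_prod_type]
  rw [Finset.sum_comm]
  simp [Finset.sum_ite_eq', mul_comm]

lemma norm2_pos {u : Fin 2 → ℝ} (hu : u ≠ 0) : 0 < norm2 u := by
  have h : u 0 ^ 2 + u 1 ^ 2 > 0 := by
    rcases (by
      by_contra h
      push_neg at h
      apply hu
      funext p
      fin_cases p <;> simp [h.1, h.2] : u 0 ≠ 0 ∨ u 1 ≠ 0) with h | h <;> positivity
  exact Real.sqrt_pos.mpr h

/-- `exp(−t₀B)x = Aᵀ(‖v₁‖₂e₁ ⊕ R(−t₀λ₂)v₂ ⊕ ⋯)`; in particular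
`Aᵀ · invRep(x; t₀)` lies on the orbit `{exp(tB)x : t ∈ ℝ}` of `x`. -/
theorem stmt4 (M : ℕ) [NeZero M] (A : Matrix (Idx M) (Idx M) ℝ) (hA : A ∈ SOb M)
    (lam : Fin M → ℝ) (B : Matrix (Idx M) (Idx M) ℝ)
    (hB : B = Aᵀ * bdiag (fun i => lam i • Jmat) * A)
    (x : Idx M → ℝ) (hv : blk (A.mulVec x) 0 ≠ 0)
    (t₀ : ℝ) (ht₀ : valid A lam x t₀) :
    (NormedSpace.exp ((-t₀) • B)).mulVec x = Aᵀ.mulVec (invRep A lam x t₀) ∧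
      Aᵀ.mulVec (invRep A lam x t₀) ∈ {y | ∃ t : ℝ, y = (NormedSpace.exp (t • B)).mulVec x} := by
  obtain ⟨hA1', _⟩ := hA
  have hA1 : Aᵀ * A = 1 := hA1'
  have hAu : IsUnit Aᵀ := by
    rw [Matrix.isUnit_iff_isUnit_det]
    exact IsUnit.of_mul_eq_one A.det (by rw [← Matrix.det_mul, hA1, Matrix.det_one])
  have hAinv : Aᵀ⁻¹ = A := Matrix.inv_eq_right_inv hA1
  set v := A.mulVec x with hvdef
  have hc : norm2 (blk v 0) ≠ 0 := ne_of_gt (norm2_pos hv)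
  replace ht₀ : (R2 (t₀ * lam 0)).mulVec e1 = (norm2 (blk v 0))⁻¹ • blk v 0 := ht₀
  have hblock : ∀ i : Fin M, (R2 ((-t₀) * lam i)).mulVec (blk v i)
      = if i = 0 then norm2 (blk v 0) • e1 else (R2 (-(t₀ * lam i))).mulVec (blk v i) := by
    intro i
    rcases eq_or_ne i 0 with h0 | h0
    · subst h0
      rw [if_pos rfl]
      have hv0 : blk v 0 = norm2 (blk v 0) • (R2 (t₀ * lam 0)).mulVec e1 := by
        rw [ht₀, smul_smul, mul_inv_cancel₀ hc, one_smul]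
      conv_lhs => rw [hv0]
      rw [Matrix.mulVec_smul, Matrix.mulVec_mulVec]
      have h2 : (-t₀) * lam 0 = -(t₀ * lam 0) := by ring
      rw [h2, R2_neg_mul_R2, Matrix.one_mulVec]
    · rw [if_neg h0, neg_mul]
  have key : (NormedSpace.exp ((-t₀) • B)).mulVec x = Aᵀ.mulVec (invRep A lam x t₀) := by
    have hD : bdiag (fun i => ((-t₀) * lam i) • Jmat)
        = (-t₀) • bdiag (fun i => lam i • Jmat) := by
      have hf : (fun i => ((-t₀) * lam i) • Jmat) = (-t₀) • fun i => lam i • Jmat := by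
        funext i
        simp [smul_smul]
      unfold bdiag
      rw [hf, Matrix.blockDiagonal_smul]
    have hBs : (-t₀) • B = Aᵀ * bdiag (fun i => ((-t₀) * lam i) • Jmat) * Aᵀ⁻¹ := by
      rw [hB, hD, hAinv, mul_smul_comm, smul_mul_assoc]
    rw [hBs, Matrix.exp_conj _ _ hAu]
    have hexp : NormedSpace.exp (bdiag fun i => ((-t₀) * lam i) • Jmat)
        = bdiag (fun i => R2 ((-t₀) * lam i)) := exp_bdiag _
    rw [hexp, hAinv, ← Matrix.mulVec_mulVec, ← Matrix.mulVec_mulVec, ← hvdef, bdiag_mulVec]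
    have hfun : cat (fun i => (R2 ((-t₀) * lam i)).mulVec (blk v i)) = invRep A lam x t₀ := by
      funext pi
      unfold invRep cat
      simp only [← hvdef]
      exact congrFun (hblock pi.2) pi.1
    rw [hfun]
  exact ⟨key, ⟨-t₀, key.symm⟩⟩
end
end

section
/- Let n = 2M, A ∈ SO(n), λ ∈ ℝᴹ, and B = Aᵀ(⊕ᵢ λᵢ J)A. Let x, x' ∈ ℝⁿ with (Ax)₁ ≠ 0 and (Ax')₁ ≠ 0, let t₀ be valid for x and t₀' be valid for x'. If invRep(x; t₀) = invRep(x'; t₀'), then x' = exp((t₀' − t₀)B)·x; in particular x and x' lie on the same orbit {exp(tB)x : t ∈ ℝ} of the one-parameter subgroup generated by B. -/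
open Matrix NormedSpace

noncomputable section

def phi : ℂ →ₐ[ℝ] Matrix (Fin 2) (Fin 2) ℝ where
  toFun z := !![z.re, -z.im; z.im, z.re]
  map_one' := by ext i j; fin_cases i <;> fin_cases j <;> simp [Matrix.one_apply]
  map_mul' z w := by
    ext i j; fin_cases i <;> fin_cases j <;>
      simp [Matrix.mul_apply, Fin.sum_univ_two, Complex.mul_re, Complex.mul_im] <;> ring
  map_zero' := by ext i j; fin_cases i <;> fin_cases j <;> simp
  map_add' z w := by ext i j; fin_cases i <;> fin_cases j <;> simp <;> ring
  commutes' r := by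
    ext i j; fin_cases i <;> fin_cases j <;>
      simp [Matrix.algebraMap_matrix_apply, Matrix.one_apply]

lemma phi_cont : Continuous phi := by
  apply continuous_matrix
  intro i j
  fin_cases i <;> fin_cases j <;> simp [phi] <;> fun_prop

lemma exp_smul_J (s : ℝ) : exp (s • Jmat) = R2 s := by
  letI : SeminormedRing (Matrix (Fin 2) (Fin 2) ℝ) := Matrix.linftyOpSemiNormedRing
  letI : NormedRing (Matrix (Fin 2) (Fin 2) ℝ) := Matrix.linftyOpNormedRing
  letI : NormedAlgebra ℝ (Matrix (Fin 2) (Fin 2) ℝ) := Matrix.linftyOpNormedAlgebra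
  have h1 : s • Jmat = phi ((s : ℂ) * Complex.I) := by
    ext i j; fin_cases i <;> fin_cases j <;> simp [phi, Jmat]
  rw [h1]
  rw [show (exp (phi (↑s * Complex.I)) : Matrix (Fin 2) (Fin 2) ℝ)
      = phi (exp ((s : ℂ) * Complex.I)) from (map_exp phi.toRingHom phi_cont _).symm]
  rw [show (exp ((s:ℂ) * Complex.I)) = Complex.exp ((s:ℂ) * Complex.I) by
      rw [← Complex.exp_eq_exp_ℂ], Complex.exp_mul_I]
  ext i j; fin_cases i <;> fin_cases j <;>
    simp [phi, R2, Complex.cos_ofReal_re, Complex.sin_ofReal_re]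

lemma R2_mul (a b : ℝ) : R2 a * R2 b = R2 (a + b) := by
  ext i j
  fin_cases i <;> fin_cases j <;>
    simp [R2, Matrix.mul_apply, Fin.sum_univ_two, Real.cos_add, Real.sin_add] <;> ring

lemma R2_zero : R2 0 = 1 := by
  ext i j; fin_cases i <;> fin_cases j <;> simp [R2, Matrix.one_apply]

lemma norm2_ne_zero {u : Fin 2 → ℝ} (h : u ≠ 0) : norm2 u ≠ 0 := by
  intro h0
  apply h
  have hle : u 0 ^ 2 + u 1 ^ 2 ≤ 0 := by
    by_contra hlt
    push_neg at hlt
    exact absurd h0 (ne_of_gt (Real.sqrt_pos.2 hlt))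
  have h0' : u 0 ^ 2 + u 1 ^ 2 = 0 := le_antisymm hle (by positivity)
  have := (add_eq_zero_iff_of_nonneg (by positivity) (by positivity)).1 h0'
  funext p
  fin_cases p <;> simpa [pow_eq_zero_iff] using (by
    first
      | exact pow_eq_zero_iff (n := 2) (by norm_num) |>.1 this.1
      | exact pow_eq_zero_iff (n := 2) (by norm_num) |>.1 this.2)

lemma blk_bdiag_mulVec {M : ℕ} (C : Fin M → Matrix (Fin 2) (Fin 2) ℝ) (v : Idx M → ℝ)
    (i : Fin M) : blk ((bdiag C).mulVec v) i = (C i).mulVec (blk v i) := by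
  funext p
  simp [blk, bdiag, Matrix.mulVec, dotProduct, Fintype.sum_prod_type,
    Matrix.blockDiagonal_apply, Finset.sum_ite_eq, Finset.sum_ite_eq', ite_mul]

lemma smul_bdiag {M : ℕ} (t : ℝ) (C : Fin M → Matrix (Fin 2) (Fin 2) ℝ) :
    t • bdiag C = bdiag (fun i => t • C i) := by
  ext ⟨p, i⟩ ⟨q, j⟩
  simp [bdiag, Matrix.blockDiagonal_apply, apply_ite (t • ·)]

/-- If `invRep(x; t₀) = invRep(x'; t₀')` then `x' = exp((t₀' − t₀)B)x`;
in particular `x` and `x'` lie on the same orbit of the one-parameter subgroup generated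
by `B`. -/
theorem stmt6 (M : ℕ) [NeZero M] (A : Matrix (Idx M) (Idx M) ℝ) (hA : A ∈ SOb M)
    (lam : Fin M → ℝ) (B : Matrix (Idx M) (Idx M) ℝ)
    (hB : B = Aᵀ * bdiag (fun i => lam i • Jmat) * A)
    (x x' : Idx M → ℝ)
    (hv : blk (A.mulVec x) 0 ≠ 0) (hv' : blk (A.mulVec x') 0 ≠ 0)
    (t₀ t₀' : ℝ) (ht₀ : valid A lam x t₀) (ht₀' : valid A lam x' t₀')
    (heq : invRep A lam x t₀ = invRep A lam x' t₀') :
    x' = (exp ((t₀' - t₀) • B)).mulVec x ∧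
      x' ∈ {y | ∃ t : ℝ, y = (exp (t • B)).mulVec x} := by
  obtain ⟨hAo, hAd⟩ := hA
  set s := t₀' - t₀ with hs
  set v := A.mulVec x with hvdef
  set v' := A.mulVec x' with hv'def
  -- A is a unit and A⁻¹ = Aᵀ
  have hU : IsUnit A := (Matrix.isUnit_iff_isUnit_det A).2 (by rw [hAd]; exact isUnit_one)
  have hAinv : A⁻¹ = Aᵀ := (Matrix.inv_eq_left_inv hAo).symm ▸ rfl
  -- norms agree
  have hn : norm2 (blk v 0) = norm2 (blk v' 0) := by
    have h00 := congr_fun heq (0, 0)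
    simpa [invRep, cat, e1] using h00
  -- each block is rotated
  have hblk : ∀ i, blk v' i = (R2 (s * lam i)).mulVec (blk v i) := by
    intro i
    by_cases hi : i = 0
    · subst hi
      have hc : norm2 (blk v 0) ≠ 0 := norm2_ne_zero hv
      have h1 : blk v 0 = norm2 (blk v 0) • (R2 (t₀ * lam 0)).mulVec e1 := by
        rw [ht₀, smul_smul, mul_inv_cancel₀ hc, one_smul]
      have h2 : blk v' 0 = norm2 (blk v 0) • (R2 (t₀' * lam 0)).mulVec e1 := by
        rw [ht₀', smul_smul, hn, mul_inv_cancel₀ (norm2_ne_zero hv'), one_smul]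
      rw [h1, h2, Matrix.mulVec_smul, Matrix.mulVec_mulVec, R2_mul]
      rw [hs]
      ring_nf
    · have hcoords : (R2 (-(t₀ * lam i))).mulVec (blk v i)
          = (R2 (-(t₀' * lam i))).mulVec (blk v' i) := by
        funext p
        have := congr_fun heq (p, i)
        simpa [invRep, cat, hi] using this
      have := congrArg ((R2 (t₀' * lam i)).mulVec) hcoords
      rw [Matrix.mulVec_mulVec, Matrix.mulVec_mulVec, R2_mul, R2_mul] at this
      have h0 : t₀' * lam i + -(t₀' * lam i) = 0 := by ring
      rw [h0, R2_zero, Matrix.one_mulVec] at this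
      rw [← this, hs]
      congr 2
      ring
  -- compute the exponential
  have hexp : exp (s • B) = Aᵀ * bdiag (fun i => R2 (s * lam i)) * A := by
    letI : SeminormedRing (Matrix (Fin 2) (Fin 2) ℝ) := Matrix.linftyOpSemiNormedRing
    letI : NormedRing (Matrix (Fin 2) (Fin 2) ℝ) := Matrix.linftyOpNormedRing
    letI : NormedAlgebra ℝ (Matrix (Fin 2) (Fin 2) ℝ) := Matrix.linftyOpNormedAlgebra
    have h1 : s • B = A⁻¹ * (bdiag fun i => (s * lam i) • Jmat) * A := by
      rw [hB, hAinv, ← smul_mul_assoc, ← mul_smul_comm, smul_bdiag]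
      simp only [smul_smul]
    have h2 : exp (bdiag fun i => (s * lam i) • Jmat)
        = bdiag fun i => R2 (s * lam i) := by
      letI : NormedAlgebra ℚ (Matrix (Fin 2) (Fin 2) ℝ) := NormedAlgebra.restrictScalars ℚ ℝ _
      unfold bdiag
      rw [Matrix.exp_blockDiagonal]
      erw [Pi.exp_def]
      exact congrArg Matrix.blockDiagonal (funext fun i => exp_smul_J (s * lam i))
    rw [h1, Matrix.exp_conj' A _ hU, hAinv, h2]
  -- conclude
  have hbd : (bdiag fun i => R2 (s * lam i)).mulVec v = v' := by
    funext ⟨p, i⟩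
    have h := congr_fun (blk_bdiag_mulVec (fun i => R2 (s * lam i)) v i) p
    have h2 := congr_fun (hblk i) p
    simp only [blk] at h h2
    rw [h, ← h2]
  have hmain : x' = (exp (s • B)).mulVec x := by
    rw [hexp, ← Matrix.mulVec_mulVec, ← Matrix.mulVec_mulVec, ← hvdef, hbd, hv'def,
      Matrix.mulVec_mulVec, hAo, Matrix.one_mulVec]
  exact ⟨hmain, ⟨s, hmain⟩⟩
end
end

section
/- Let n = 2M, let A be an invertible real n×n matrix, λ ∈ ℝᴹ with λ₁ ≠ 0, and L = A⁻¹(⊕ᵢ λᵢ K)A. Let x ∈ ℝⁿ, v = Ax with blocks v₁, …, v_M, assume |v_{1,2}| < |v_{1,1}|, and set t₀ = artanh(v_{1,2}/v_{1,1})/λ₁. Then exp(−t₀L)·x = A⁻¹(sgn(v_{1,1})·√(v_{1,1}² − v_{1,2}²)·e₁ ⊕ H(−t₀λ₂)v₂ ⊕ ⋯ ⊕ H(−t₀λ_M)v_M); in particular A⁻¹·invRep_h(x) lies on the orbit {exp(tL)x : t ∈ ℝ} of x. -/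
open Matrix NormedSpace

noncomputable section

/-- `H(t)`: the 2×2 hyperbolic rotation with rows (cosh t, sinh t), (sinh t, cosh t). -/
def Hyp (t : ℝ) : Matrix (Fin 2) (Fin 2) ℝ :=
  !![Real.cosh t, Real.sinh t; Real.sinh t, Real.cosh t]

/-- `G(t)`: the 2×2 shear with rows (1, t), (0, 1). -/
def Gm (t : ℝ) : Matrix (Fin 2) (Fin 2) ℝ := !![1, t; 0, 1]

/-- `K`: rows (0, 1), (1, 0). -/
def Kmat : Matrix (Fin 2) (Fin 2) ℝ := !![0, 1; 1, 0]

/-- `N`: rows (0, 1), (0, 0). -/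
def Nmat : Matrix (Fin 2) (Fin 2) ℝ := !![0, 1; 0, 0]

/-- `e₂ = (0, 1) ∈ ℝ²`. -/
def e2 : Fin 2 → ℝ := ![0, 1]

/-- The inverse hyperbolic tangent. -/
def artanh (x : ℝ) : ℝ := Real.log ((1 + x) / (1 - x)) / 2

/-- `t₀` is valid for `x` (elliptic case): `R(t₀λ₁)e₁ = v₁/‖v₁‖₂` where `v = Ax`. -/
def validE {M : ℕ} [NeZero M] (A : Matrix (Idx M) (Idx M) ℝ) (lam : Fin M → ℝ)
    (x : Idx M → ℝ) (t₀ : ℝ) : Prop :=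
  (R2 (t₀ * lam 0)).mulVec e1 = (norm2 (blk (A.mulVec x) 0))⁻¹ • blk (A.mulVec x) 0

/-- `invRep_e(x; t₀) = ‖v₁‖₂ e₁ ⊕ R(−t₀λ₂)v₂ ⊕ ⋯ ⊕ R(−t₀λ_M)v_M`, where `v = Ax`. -/
def invRepE {M : ℕ} [NeZero M] (A : Matrix (Idx M) (Idx M) ℝ) (lam : Fin M → ℝ)
    (x : Idx M → ℝ) (t₀ : ℝ) : Idx M → ℝ :=
  cat (fun i =>
    if i = 0 then norm2 (blk (A.mulVec x) 0) • e1
    else (R2 (-(t₀ * lam i))).mulVec (blk (A.mulVec x) i))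

/-- The hyperbolic parameter `t₀ = artanh(v_{1,2}/v_{1,1})/λ₁`, where `v = Ax`. -/
def t0H {M : ℕ} [NeZero M] (A : Matrix (Idx M) (Idx M) ℝ) (lam : Fin M → ℝ)
    (x : Idx M → ℝ) : ℝ :=
  artanh (blk (A.mulVec x) 0 1 / blk (A.mulVec x) 0 0) / lam 0

/-- `invRep_h(x) = sgn(v_{1,1})√(v_{1,1}² − v_{1,2}²) e₁ ⊕ H(−t₀λ₂)v₂ ⊕ ⋯`, `v = Ax`. -/
def invRepH {M : ℕ} [NeZero M] (A : Matrix (Idx M) (Idx M) ℝ) (lam : Fin M → ℝ)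
    (x : Idx M → ℝ) : Idx M → ℝ :=
  cat (fun i =>
    if i = 0 then
      (Real.sign (blk (A.mulVec x) 0 0) *
        Real.sqrt (blk (A.mulVec x) 0 0 ^ 2 - blk (A.mulVec x) 0 1 ^ 2)) • e1
    else (Hyp (-(t0H A lam x * lam i))).mulVec (blk (A.mulVec x) i))

/-- The parabolic parameter `t₀ = v_{1,1}/(λ₁ v_{1,2})`, where `v = Ax`. -/
def t0P {M : ℕ} [NeZero M] (A : Matrix (Idx M) (Idx M) ℝ) (lam : Fin M → ℝ)
    (x : Idx M → ℝ) : ℝ :=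
  blk (A.mulVec x) 0 0 / (lam 0 * blk (A.mulVec x) 0 1)

/-- `invRep_p(x) = v_{1,2} e₂ ⊕ G(−t₀λ₂)v₂ ⊕ ⋯ ⊕ G(−t₀λ_M)v_M`, where `v = Ax`. -/
def invRepP {M : ℕ} [NeZero M] (A : Matrix (Idx M) (Idx M) ℝ) (lam : Fin M → ℝ)
    (x : Idx M → ℝ) : Idx M → ℝ :=
  cat (fun i =>
    if i = 0 then blk (A.mulVec x) 0 1 • e2
    else (Gm (-(t0P A lam x * lam i))).mulVec (blk (A.mulVec x) i))


lemma exp_smul_Kmat (s : ℝ) : exp (s • Kmat) = Hyp s := by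
  have hdet : (!![(1:ℝ),1;1,-1]).det = -2 := by simp [Matrix.det_fin_two_of]; ring
  have hP : IsUnit (!![(1:ℝ),1;1,-1]) := by
    simp [Matrix.isUnit_iff_isUnit_det, hdet]
  have hPinv : (!![(1:ℝ),1;1,-1])⁻¹ = !![1/2,1/2;1/2,-1/2] := by
    rw [Matrix.inv_def, hdet, Matrix.adjugate_fin_two]
    norm_num [Matrix.smul_of]
  have key : s • Kmat =
      (hP.unit : Matrix (Fin 2) (Fin 2) ℝ) * Matrix.diagonal ![s, -s] *
        ((hP.unit⁻¹ : (Matrix (Fin 2) (Fin 2) ℝ)ˣ) : Matrix (Fin 2) (Fin 2) ℝ) := by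
    rw [Matrix.coe_units_inv, hP.unit_spec, hPinv]
    ext i j; fin_cases i <;> fin_cases j <;>
      simp [Kmat, Matrix.mul_apply, Fin.sum_univ_two, Matrix.diagonal,
        Matrix.vecHead, Matrix.vecTail] <;> ring
  rw [key, Matrix.exp_units_conj, Matrix.exp_diagonal,
    Matrix.coe_units_inv, hP.unit_spec, hPinv]
  have hexp : exp ![s, -s] = ![Real.exp s, Real.exp (-s)] := by
    rw [Pi.exp_def]
    funext i; fin_cases i <;> simp [← Real.exp_eq_exp_ℝ]
  rw [hexp]
  ext i j; fin_cases i <;> fin_cases j <;>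
    simp [Hyp, Matrix.mul_apply, Fin.sum_univ_two, Matrix.diagonal,
      Matrix.vecHead, Matrix.vecTail, Real.cosh_eq, Real.sinh_eq] <;> ring

lemma coshsinh_artanh {r : ℝ} (hr : |r| < 1) :
    Real.cosh (artanh r) * Real.sqrt (1 - r ^ 2) = 1 ∧
    Real.sinh (artanh r) * Real.sqrt (1 - r ^ 2) = r := by
  have h1 : 0 < 1 - r := by cases' abs_lt.1 hr with h h; linarith
  have h2 : 0 < 1 + r := by cases' abs_lt.1 hr with h h; linarith
  have hy : (0:ℝ) < (1 + r) / (1 - r) := by positivity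
  have he : Real.exp (artanh r) = Real.sqrt ((1 + r) / (1 - r)) := by
    rw [artanh, Real.exp_half, Real.exp_log hy]
  have hkey1 : Real.sqrt ((1 + r) / (1 - r)) * Real.sqrt (1 - r ^ 2) = 1 + r := by
    rw [← Real.sqrt_mul hy.le]
    have : (1 + r) / (1 - r) * (1 - r ^ 2) = (1 + r) ^ 2 := by
      field_simp; ring
    rw [this, Real.sqrt_sq h2.le]
  have hkey2 : Real.sqrt (1 - r ^ 2) / Real.sqrt ((1 + r) / (1 - r)) = 1 - r := by
    rw [← Real.sqrt_div (by nlinarith : (0:ℝ) ≤ 1 - r ^ 2)]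
    have : (1 - r ^ 2) / ((1 + r) / (1 - r)) = (1 - r) ^ 2 := by
      field_simp; ring
    rw [this, Real.sqrt_sq h1.le]
  have hkey2' : (Real.sqrt ((1 + r) / (1 - r)))⁻¹ * Real.sqrt (1 - r ^ 2) = 1 - r := by
    rw [inv_mul_eq_div]; exact hkey2
  constructor
  · rw [Real.cosh_eq, he, Real.exp_neg, he]
    linear_combination (hkey1 + hkey2') / 2
  · rw [Real.sinh_eq, he, Real.exp_neg, he]
    linear_combination (hkey1 - hkey2') / 2

lemma hyp_block0 {a b : ℝ} (hv : |b| < |a|) :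
    (Hyp (-(artanh (b / a)))).mulVec ![a, b] =
      (Real.sign a * Real.sqrt (a ^ 2 - b ^ 2)) • e1 := by
  have ha : a ≠ 0 := by
    intro h; rw [h] at hv; simp at hv; exact absurd hv (abs_nonneg b).not_gt
  have hr : |b / a| < 1 := by
    rw [abs_div, div_lt_one (lt_of_le_of_lt (abs_nonneg b) hv)]; exact hv
  obtain ⟨hC, hS⟩ := coshsinh_artanh hr
  have hpos : 0 < a ^ 2 - b ^ 2 := by
    nlinarith [sq_abs a, sq_abs b, abs_nonneg a, abs_nonneg b, hv]
  have hposr : 0 < 1 - (b / a) ^ 2 := by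
    nlinarith [sq_abs (b / a), abs_nonneg (b / a), hr]
  have hs' : 0 < Real.sqrt (1 - (b / a) ^ 2) := Real.sqrt_pos.2 hposr
  have hs : 0 < Real.sqrt (a ^ 2 - b ^ 2) := Real.sqrt_pos.2 hpos
  have hsqrt : Real.sqrt (1 - (b / a) ^ 2) = Real.sqrt (a ^ 2 - b ^ 2) / |a| := by
    have : 1 - (b / a) ^ 2 = (a ^ 2 - b ^ 2) / a ^ 2 := by field_simp
    rw [this, Real.sqrt_div hpos.le, Real.sqrt_sq_eq_abs]
  set S' := Real.sqrt (a ^ 2 - b ^ 2) with hS'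
  have habs : (0:ℝ) < |a| := abs_pos.2 ha
  rw [hsqrt] at hC hS
  -- hC : cosh * (S'/|a|) = 1, hS : sinh * (S'/|a|) = b/a
  have hC' : Real.cosh (artanh (b / a)) = |a| / S' := by
    field_simp at hC ⊢; linarith [hC]
  have hS2 : Real.sinh (artanh (b / a)) = b * |a| / (a * S') := by
    field_simp at hS ⊢; nlinarith [hS]
  funext p
  fin_cases p <;>
    simp [Hyp, Matrix.mulVec, dotProduct, Fin.sum_univ_two, e1,
      Real.cosh_neg, Real.sinh_neg, hC', hS2]
  · have hssq : S' ^ 2 = a ^ 2 - b ^ 2 := Real.sq_sqrt hpos.le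
    rcases lt_or_gt_of_ne ha with h | h
    · rw [abs_of_neg h, Real.sign_of_neg h]
      field_simp
      linear_combination hssq
    · rw [abs_of_pos h, Real.sign_of_pos h]
      field_simp
      linear_combination (-1 : ℝ) * hssq
  · field_simp
    ring

/-- **Hyperbolic orbit representation.** -/
theorem stmt13 (M : ℕ) [NeZero M] (A : Matrix (Idx M) (Idx M) ℝ) (hA : IsUnit A)
    (lam : Fin M → ℝ) (hlam : lam 0 ≠ 0)
    (L : Matrix (Idx M) (Idx M) ℝ)
    (hL : L = A⁻¹ * bdiag (fun i => lam i • Kmat) * A)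
    (x : Idx M → ℝ) (hv : |blk (A.mulVec x) 0 1| < |blk (A.mulVec x) 0 0|) :
    (exp ((-(t0H A lam x)) • L)).mulVec x = A⁻¹.mulVec (invRepH A lam x) ∧
      A⁻¹.mulVec (invRepH A lam x) ∈
        {y | ∃ t : ℝ, y = (exp (t • L)).mulVec x} := by
  set v := A.mulVec x with hvdef
  set t₀ := t0H A lam x with ht0
  have hmain : (exp ((-t₀) • L)).mulVec x = A⁻¹.mulVec (invRepH A lam x) := by
    have hconj : (-t₀) • L =
        ((hA.unit⁻¹ : (Matrix (Idx M) (Idx M) ℝ)ˣ) : Matrix (Idx M) (Idx M) ℝ) *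
          ((-t₀) • bdiag (fun i => lam i • Kmat)) *
          ((hA.unit⁻¹⁻¹ : (Matrix (Idx M) (Idx M) ℝ)ˣ) : Matrix (Idx M) (Idx M) ℝ) := by
      rw [hL]
      simp only [inv_inv, Matrix.coe_units_inv, hA.unit_spec, Matrix.smul_mul, Matrix.mul_smul]
    have hexp : exp ((-t₀) • L) =
        A⁻¹ * exp ((-t₀) • bdiag (fun i => lam i • Kmat)) * A := by
      rw [hconj, Matrix.exp_units_conj]
      simp only [inv_inv, Matrix.coe_units_inv, hA.unit_spec]
    have hfun : (-t₀) • (fun i => lam i • Kmat) = fun i : Fin M => (-(t₀ * lam i)) • Kmat := by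
      funext i; simp [smul_smul]
    have hsm : (-t₀) • bdiag (fun i => lam i • Kmat) =
        bdiag (fun i => (-(t₀ * lam i)) • Kmat) := by
      rw [bdiag, ← Matrix.blockDiagonal_smul, hfun, bdiag]
    have hbd : exp ((-t₀) • bdiag (fun i => lam i • Kmat)) =
        bdiag (fun i => Hyp (-(t₀ * lam i))) := by
      letI : SeminormedRing (Matrix (Fin 2) (Fin 2) ℝ) := Matrix.linftyOpSemiNormedRing
      letI : NormedRing (Matrix (Fin 2) (Fin 2) ℝ) := Matrix.linftyOpNormedRing
      letI : NormedAlgebra ℝ (Matrix (Fin 2) (Fin 2) ℝ) := Matrix.linftyOpNormedAlgebra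
      letI : NormedAlgebra ℚ (Matrix (Fin 2) (Fin 2) ℝ) := NormedAlgebra.restrictScalars ℚ ℝ _
      rw [hsm, bdiag, bdiag, Matrix.exp_blockDiagonal]
      exact congrArg _ (funext fun i => (Pi.coe_exp _ i).trans (exp_smul_Kmat _))
    rw [hexp, hbd, ← Matrix.mulVec_mulVec, ← Matrix.mulVec_mulVec]
    refine congrArg _ ?_
    rw [bdiag_mulVec]
    funext pi
    obtain ⟨p, i⟩ := pi
    simp only [invRepH, cat, ← hvdef, ← ht0]
    by_cases hi : i = 0
    · subst hi
      rw [if_pos rfl]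
      have hblk : blk v 0 = ![blk v 0 0, blk v 0 1] := by
        funext q; fin_cases q <;> rfl
      have ht : t₀ * lam 0 = artanh (blk v 0 1 / blk v 0 0) := by
        rw [ht0, t0H, ← hvdef, div_mul_cancel₀ _ hlam]
      conv_lhs => rw [ht, hblk]
      exact congrFun (hyp_block0 hv) p
    · rw [if_neg hi]
  refine ⟨hmain, ⟨-t₀, hmain.symm⟩⟩
end
end

section
/- Let n = 2M, let A be an invertible real n×n matrix, λ ∈ ℝᴹ with λ₁ ≠ 0, and L = A⁻¹(⊕ᵢ λᵢ N)A. Let x ∈ ℝⁿ, v = Ax with blocks v₁, …, v_M, assume v_{1,2} ≠ 0, and set t₀ = v_{1,1}/(λ₁·v_{1,2}). Then exp(−t₀L)·x = A⁻¹(v_{1,2}·e₂ ⊕ G(−t₀λ₂)v₂ ⊕ ⋯ ⊕ G(−t₀λ_M)v_M); in particular A⁻¹·invRep_p(x) lies on the orbit {exp(tL)x : t ∈ ℝ} of x. -/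
open Matrix NormedSpace

noncomputable section

theorem exp_pi_Nmat {M : ℕ} (s : Fin M → ℝ) :
    exp (fun i => s i • Nmat) = fun i => Gm (s i) := by
  set f : Fin M → Matrix (Fin 2) (Fin 2) ℝ := fun i => s i • Nmat with hf
  have hsq : f ^ 2 = 0 := by
    funext i
    rw [Pi.pow_apply]
    ext p q
    fin_cases p <;> fin_cases q <;>
      simp [f, Nmat, pow_two, Matrix.mul_apply, Fin.sum_univ_two]
  rw [exp_eq_tsum (𝕂 := ℝ)]
  show (∑' n : ℕ, (Nat.factorial n : ℝ)⁻¹ • f ^ n) = fun i => Gm (s i)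
  rw [tsum_eq_sum (s := Finset.range 2) (f := fun n => ((Nat.factorial n : ℝ)⁻¹ • f ^ n))]
  · rw [Finset.sum_range_succ, Finset.sum_range_one]
    funext i
    rw [Pi.add_apply, Pi.smul_apply, Pi.smul_apply, Pi.pow_apply, Pi.pow_apply]
    ext p q
    fin_cases p <;> fin_cases q <;> simp [f, Nmat, Gm, Matrix.one_apply]
  · intro n hn
    have h2 : 2 ≤ n := by simp at hn; omega
    have : f ^ n = 0 := by
      calc f ^ n = f ^ 2 * f ^ (n - 2) := by rw [← pow_add]; congr 1; omega
        _ = 0 := by rw [hsq, zero_mul]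
    simp [this]

theorem exp_smul_Nmat (s : ℝ) : exp (s • Nmat) = Gm s := by
  have hsq : (s • Nmat) ^ 2 = 0 := by
    ext i j
    fin_cases i <;> fin_cases j <;> simp [Nmat, pow_two, Matrix.mul_apply, Fin.sum_univ_two]
  rw [exp_eq_tsum (𝕂 := ℝ)]
  show (∑' n : ℕ, (Nat.factorial n : ℝ)⁻¹ • (s • Nmat) ^ n) = Gm s
  rw [tsum_eq_sum (s := Finset.range 2) (f := fun n => ((Nat.factorial n : ℝ)⁻¹ • (s • Nmat) ^ n))]
  · rw [Finset.sum_range_succ, Finset.sum_range_one]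
    ext i j
    fin_cases i <;> fin_cases j <;> simp [Nmat, Gm, Matrix.one_apply]
  · intro n hn
    have h2 : 2 ≤ n := by simp at hn; omega
    have : (s • Nmat) ^ n = 0 := by
      calc (s • Nmat) ^ n = (s • Nmat) ^ 2 * (s • Nmat) ^ (n - 2) := by
            rw [← pow_add]; congr 1; omega
        _ = 0 := by rw [hsq, zero_mul]
    simp [this]

theorem bd_mulVec {M : ℕ} (d : Fin M → Matrix (Fin 2) (Fin 2) ℝ) (v : Idx M → ℝ)
    (p : Fin 2) (i : Fin M) :
    (Matrix.blockDiagonal d).mulVec v (p, i) = (d i).mulVec (blk v i) p := by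
  simp [Matrix.mulVec, dotProduct, Fintype.sum_prod_type_right,
    Matrix.blockDiagonal_apply, blk, ite_mul, Finset.sum_ite_eq']

theorem exp_smul_L {M : ℕ} [NeZero M] (A : Matrix (Idx M) (Idx M) ℝ) (hA : IsUnit A)
    (lam : Fin M → ℝ) (L : Matrix (Idx M) (Idx M) ℝ)
    (hL : L = A⁻¹ * bdiag (fun i => lam i • Nmat) * A) (t : ℝ) :
    exp (t • L) = A⁻¹ * Matrix.blockDiagonal (fun i => Gm (t * lam i)) * A := by
  rw [hL]
  have h1 : t • (A⁻¹ * bdiag (fun i => lam i • Nmat) * A)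
      = A⁻¹ * (t • bdiag (fun i => lam i • Nmat)) * A := by
    simp [Matrix.mul_smul, Matrix.smul_mul]
  rw [h1, Matrix.exp_conj' A _ hA]
  have h2 : t • bdiag (fun i => lam i • Nmat)
      = Matrix.blockDiagonal (fun i => (t * lam i) • Nmat) := by
    rw [bdiag, ← Matrix.blockDiagonal_smul]
    exact congrArg _ (funext fun i => by rw [Pi.smul_apply, smul_smul])
  rw [h2, Matrix.exp_blockDiagonal]
  rw [show (exp fun i => (t * lam i) • Nmat) = fun i => Gm (t * lam i) from
    exp_pi_Nmat (fun i => t * lam i)]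

/-- **Parabolic orbit representation.** -/
theorem stmt15 (M : ℕ) [NeZero M] (A : Matrix (Idx M) (Idx M) ℝ) (hA : IsUnit A)
    (lam : Fin M → ℝ) (hlam : lam 0 ≠ 0)
    (L : Matrix (Idx M) (Idx M) ℝ)
    (hL : L = A⁻¹ * bdiag (fun i => lam i • Nmat) * A)
    (x : Idx M → ℝ) (hv : blk (A.mulVec x) 0 1 ≠ 0) :
    (exp ((-(t0P A lam x)) • L)).mulVec x = A⁻¹.mulVec (invRepP A lam x) ∧
      A⁻¹.mulVec (invRepP A lam x) ∈
        {y | ∃ t : ℝ, y = (exp (t • L)).mulVec x} := by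
  have key : (exp ((-(t0P A lam x)) • L)).mulVec x = A⁻¹.mulVec (invRepP A lam x) := by
    rw [exp_smul_L A hA lam L hL]
    rw [← Matrix.mulVec_mulVec, ← Matrix.mulVec_mulVec]
    refine congrArg A⁻¹.mulVec ?_
    funext pi
    obtain ⟨p, i⟩ := pi
    rw [bd_mulVec]
    simp only [invRepP, cat]
    by_cases hi : i = 0
    · subst hi
      simp only [if_pos rfl]
      have ht : t0P A lam x * lam 0 = blk (A.mulVec x) 0 0 / blk (A.mulVec x) 0 1 := by
        rw [t0P]; field_simp
      fin_cases p <;>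
        simp [Gm, Matrix.mulVec, dotProduct, Fin.sum_univ_two, e2, neg_mul, ht] <;>
        field_simp <;> ring
    · simp only [if_neg hi]
      congr 1
      rw [Gm, Gm]
      ring_nf
  refine ⟨key, -(t0P A lam x), key.symm⟩
end
end

section
/- Let n = 2M, let A be an invertible real n×n matrix, λ ∈ ℝᴹ with λ₁ ≠ 0, and L = A⁻¹(⊕ᵢ λᵢ N)A. Let x ∈ ℝⁿ with v = Ax satisfying v_{1,2} ≠ 0, and for s ∈ ℝ set x' = exp(sL)x and v' = Ax'. Then v'ᵢ = G(sλᵢ)vᵢ and v'_{i,2} = v_{i,2} for every i; in particular v'_{1,2} = v_{1,2} ≠ 0, v'_{1,1}/(λ₁·v'_{1,2}) = s + v_{1,1}/(λ₁·v_{1,2}), and invRep_p(x') = invRep_p(x). -/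
open Matrix NormedSpace

noncomputable section

lemma exp_smul_Nmat_s16 (t : ℝ) : NormedSpace.exp (t • Nmat) = Gm t := by
  have hsq : (t • Nmat) ^ 2 = 0 := by
    ext i j; fin_cases i <;> fin_cases j <;>
      simp [pow_two, Nmat, Matrix.mul_apply, Fin.sum_univ_two]
  rw [exp_eq_tsum ℝ]
  rw [show (fun x : Matrix (Fin 2) (Fin 2) ℝ => ∑' n : ℕ, (n.factorial⁻¹ : ℝ) • x ^ n)
      (t • Nmat) = ∑' n : ℕ, (n.factorial⁻¹ : ℝ) • (t • Nmat) ^ n from rfl,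
    tsum_eq_sum (s := Finset.range 2)]
  · simp only [Finset.sum_range_succ, Finset.sum_range_zero]
    ext i j
    fin_cases i <;> fin_cases j <;> simp [Gm, Nmat]
  · intro n hn
    have h2 : 2 ≤ n := by simp at hn; omega
    have : (t • Nmat) ^ n = 0 := by
      calc (t • Nmat) ^ n = (t • Nmat) ^ 2 * (t • Nmat) ^ (n - 2) := by
            rw [← pow_add]; congr 1; omega
        _ = 0 := by rw [hsq, zero_mul]
    simp [this]

lemma exp_pi_matrix {M : ℕ} (C : Fin M → Matrix (Fin 2) (Fin 2) ℝ) :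
    NormedSpace.exp C = fun i => NormedSpace.exp (C i) := by
  letI : NormedRing (Matrix (Fin 2) (Fin 2) ℝ) := Matrix.linftyOpNormedRing
  letI : NormedAlgebra ℝ (Matrix (Fin 2) (Fin 2) ℝ) := Matrix.linftyOpNormedAlgebra
  letI : NormedAlgebra ℚ (Matrix (Fin 2) (Fin 2) ℝ) := NormedAlgebra.restrictScalars ℚ ℝ _
  exact Pi.exp_def C

lemma Gm_mulVec (t : ℝ) (u : Fin 2 → ℝ) :
    (Gm t).mulVec u = ![u 0 + t * u 1, u 1] := by
  funext p
  fin_cases p <;> simp [Gm, Matrix.mulVec, dotProduct, Fin.sum_univ_two, Matrix.vecHead, Matrix.vecTail]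

lemma Gm_mulVec_Gm (a b : ℝ) (u : Fin 2 → ℝ) :
    (Gm a).mulVec ((Gm b).mulVec u) = (Gm (a + b)).mulVec u := by
  funext p
  simp only [Gm_mulVec]; fin_cases p <;> simp [Matrix.vecHead, Matrix.vecTail] <;> ring

/-- **Parabolic invariance of `invRep_p`.** With `x' = exp(sL)x`, `v' = Ax'`:
`v'ᵢ = G(sλᵢ)vᵢ` and `v'_{i,2} = v_{i,2}` for all `i`; in particular
`v'_{1,2} = v_{1,2} ≠ 0`, `v'_{1,1}/(λ₁v'_{1,2}) = s + v_{1,1}/(λ₁v_{1,2})`, and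
`invRep_p(x') = invRep_p(x)`. -/
theorem stmt16 (M : ℕ) [NeZero M] (A : Matrix (Idx M) (Idx M) ℝ) (hA : IsUnit A)
    (lam : Fin M → ℝ) (hlam : lam 0 ≠ 0)
    (L : Matrix (Idx M) (Idx M) ℝ)
    (hL : L = A⁻¹ * bdiag (fun i => lam i • Nmat) * A)
    (x : Idx M → ℝ) (hv : blk (A.mulVec x) 0 1 ≠ 0)
    (s : ℝ) (x' : Idx M → ℝ) (hx' : x' = (NormedSpace.exp (s • L)).mulVec x) :
    (∀ i : Fin M, blk (A.mulVec x') i = (Gm (s * lam i)).mulVec (blk (A.mulVec x) i)) ∧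
      (∀ i : Fin M, blk (A.mulVec x') i 1 = blk (A.mulVec x) i 1) ∧
      (blk (A.mulVec x') 0 1 = blk (A.mulVec x) 0 1 ∧ blk (A.mulVec x') 0 1 ≠ 0) ∧
      blk (A.mulVec x') 0 0 / (lam 0 * blk (A.mulVec x') 0 1) =
        s + blk (A.mulVec x) 0 0 / (lam 0 * blk (A.mulVec x) 0 1) ∧
      invRepP A lam x' = invRepP A lam x := by
  have hdet : IsUnit A.det := (Matrix.isUnit_iff_isUnit_det A).mp hA
  have hAi : A * A⁻¹ = 1 := Matrix.mul_nonsing_inv A hdet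
  have hsL : s • L = A⁻¹ * (bdiag (fun i => (s * lam i) • Nmat)) * A := by
    rw [hL, ← smul_mul_assoc, ← mul_smul_comm]
    congr 2
    unfold bdiag
    rw [← Matrix.blockDiagonal_smul]
    have : (s • fun i => lam i • Nmat) = fun i => (s * lam i) • Nmat := by
      funext i; simp [smul_smul]
    rw [this]
  have key : A.mulVec x' = (bdiag (fun i => Gm (s * lam i))).mulVec (A.mulVec x) := by
    rw [hx', hsL, Matrix.exp_conj' A (bdiag fun i => (s * lam i) • Nmat) hA, Matrix.mulVec_mulVec,
      ← mul_assoc, ← mul_assoc, hAi, one_mul, ← Matrix.mulVec_mulVec]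
    unfold bdiag
    rw [Matrix.exp_blockDiagonal, exp_pi_matrix]
    have : (fun i => NormedSpace.exp ((s * lam i) • Nmat)) = fun i => Gm (s * lam i) := by
      funext i; exact exp_smul_Nmat_s16 (s * lam i)
    rw [this]
  have h1 : ∀ i : Fin M, blk (A.mulVec x') i = (Gm (s * lam i)).mulVec (blk (A.mulVec x) i) := by
    intro i; rw [key]; exact blk_bdiag_mulVec _ _ i
  have h2 : ∀ i : Fin M, blk (A.mulVec x') i 1 = blk (A.mulVec x) i 1 := by
    intro i; rw [h1 i, Gm_mulVec]; simp
  have h3 : blk (A.mulVec x') 0 0 = blk (A.mulVec x) 0 0 + s * lam 0 * blk (A.mulVec x) 0 1 := by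
    rw [h1 0, Gm_mulVec]; simp
  have hratio : blk (A.mulVec x') 0 0 / (lam 0 * blk (A.mulVec x') 0 1) =
      s + blk (A.mulVec x) 0 0 / (lam 0 * blk (A.mulVec x) 0 1) := by
    rw [h3, h2 0]
    field_simp
    ring
  refine ⟨h1, h2, ⟨h2 0, by rw [h2 0]; exact hv⟩, hratio, ?_⟩
  have ht0 : t0P A lam x' = s + t0P A lam x := hratio
  unfold invRepP
  refine congrArg cat (funext fun i => ?_)
  by_cases hi : i = 0
  · simp [hi, h2 0]
  · simp only [if_neg hi, h1 i, Gm_mulVec_Gm, ht0]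
    ring_nf
end
end

section
/- Let n = 2M, A₀ ∈ SO(n), let p₁, …, p_M be real polynomials evaluated on 2×2 real matrices, and let α, β ∈ ℝ. Define ρ : ℝⁿ → ℝ by ρ(x) = α·trace(W(x)) + β·(W(x)_{12} − W(x)_{21}), where W(x) = Σ_{i=1}^{M} pᵢ(vᵢvᵢᵀ) and v = A₀x has blocks v₁, …, v_M ∈ ℝ². Then ρ is invariant under the one-parameter subgroup {A₀ᵀ(⊕ᵢ R(t))A₀ : t ∈ ℝ}: for all t ∈ ℝ and all x ∈ ℝⁿ, ρ(A₀ᵀ(⊕ᵢ R(t))A₀ · x) = ρ(x). -/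
open Matrix

noncomputable section

/-- `W(x) = Σᵢ pᵢ(vᵢvᵢᵀ)` where `v = A₀x`, `vᵢvᵢᵀ` the 2×2 outer product, and each
polynomial `pᵢ` is evaluated on 2×2 matrices via the polynomial functional calculus. -/
def Wmat {M : ℕ} (A₀ : Matrix (Idx M) (Idx M) ℝ) (p : Fin M → Polynomial ℝ)
    (x : Idx M → ℝ) : Matrix (Fin 2) (Fin 2) ℝ :=
  ∑ i : Fin M,
    Polynomial.aeval
      (Matrix.vecMulVec (blk (A₀.mulVec x) i) (blk (A₀.mulVec x) i)) (p i)

lemma R2_transpose (t : ℝ) : (R2 t)ᵀ = !![Real.cos t, Real.sin t; -Real.sin t, Real.cos t] := by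
  ext i j; fin_cases i <;> fin_cases j <;> simp [R2]

lemma R2_mul_transpose (t : ℝ) : R2 t * (R2 t)ᵀ = 1 := by
  rw [R2_transpose]
  ext i j
  fin_cases i <;> fin_cases j <;>
    simp [R2, Matrix.mul_apply, Fin.sum_univ_two, Matrix.one_apply] <;>
    nlinarith [Real.sin_sq_add_cos_sq t]

lemma transpose_mul_R2 (t : ℝ) : (R2 t)ᵀ * R2 t = 1 := by
  rw [R2_transpose]
  ext i j
  fin_cases i <;> fin_cases j <;>
    simp [R2, Matrix.mul_apply, Fin.sum_univ_two, Matrix.one_apply] <;>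
    nlinarith [Real.sin_sq_add_cos_sq t]

lemma blk_bdiag {M : ℕ} (C : Fin M → Matrix (Fin 2) (Fin 2) ℝ) (v : (Fin 2 × Fin M) → ℝ)
    (i : Fin M) :
    (fun p => (Matrix.blockDiagonal C).mulVec v (p, i)) = (C i).mulVec (fun p => v (p, i)) := by
  funext q
  simp only [Matrix.mulVec, Matrix.blockDiagonal_apply, dotProduct, Fintype.sum_prod_type,
    ite_mul, zero_mul]
  rw [Finset.sum_comm]
  simp [Finset.sum_ite_eq']

lemma vecMulVec_mulVec (Mm : Matrix (Fin 2) (Fin 2) ℝ) (u : Fin 2 → ℝ) :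
    Matrix.vecMulVec (Mm.mulVec u) (Mm.mulVec u) = Mm * Matrix.vecMulVec u u * Mmᵀ := by
  ext i j
  simp [Matrix.vecMulVec_apply, Matrix.mul_apply, Matrix.mulVec, dotProduct,
    Fin.sum_univ_two, Matrix.transpose_apply]
  fin_cases i <;> fin_cases j <;> simp <;> ring

lemma aeval_conj (Rm X : Matrix (Fin 2) (Fin 2) ℝ) (h : Rm * Rmᵀ = 1) (h' : Rmᵀ * Rm = 1)
    (q : Polynomial ℝ) :
    Polynomial.aeval (Rm * X * Rmᵀ) q = Rm * Polynomial.aeval X q * Rmᵀ := by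
  induction q using Polynomial.induction_on' with
  | add f g hf hg => simp [hf, hg, Matrix.mul_add, Matrix.add_mul]
  | monomial n a =>
      simp only [Polynomial.aeval_monomial]
      have hpow : ∀ m : ℕ, (Rm * X * Rmᵀ) ^ m = Rm * X ^ m * Rmᵀ := by
        intro m
        induction m with
        | zero => rw [pow_zero, pow_zero, Matrix.mul_one, h]
        | succ k ih =>
            rw [pow_succ, pow_succ, ih]
            calc Rm * X ^ k * Rmᵀ * (Rm * X * Rmᵀ)
                = Rm * X ^ k * (Rmᵀ * Rm) * X * Rmᵀ := by noncomm_ring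
              _ = Rm * (X ^ k * X) * Rmᵀ := by rw [h']; noncomm_ring
      rw [hpow]
      simp [Algebra.algebraMap_eq_smul_one, Matrix.smul_mul, Matrix.mul_smul]

lemma conj_trace (t : ℝ) (W : Matrix (Fin 2) (Fin 2) ℝ) :
    (R2 t * W * (R2 t)ᵀ).trace = W.trace := by
  rw [Matrix.trace_mul_cycle, transpose_mul_R2, Matrix.one_mul]

lemma conj_off (t : ℝ) (W : Matrix (Fin 2) (Fin 2) ℝ) :
    (R2 t * W * (R2 t)ᵀ) 0 1 - (R2 t * W * (R2 t)ᵀ) 1 0 = W 0 1 - W 1 0 := by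
  rw [R2_transpose]
  simp only [R2, Matrix.mul_apply, Fin.sum_univ_two, Matrix.cons_val', Matrix.cons_val_zero,
    Matrix.cons_val_one, Matrix.head_cons, Matrix.empty_val', Matrix.cons_val_fin_one,
    Matrix.of_apply, Matrix.vecHead]
  linear_combination (W 0 1 - W 1 0) * (Real.sin_sq_add_cos_sq t)

lemma Wmat_conj {M : ℕ} (A₀ : Matrix (Idx M) (Idx M) ℝ) (hA₀ : A₀ ∈ SOb M)
    (p : Fin M → Polynomial ℝ) (t : ℝ) (x : Idx M → ℝ) :
    Wmat A₀ p ((A₀ᵀ * bdiag (fun _ => R2 t) * A₀).mulVec x)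
      = R2 t * Wmat A₀ p x * (R2 t)ᵀ := by
  have hAAT : A₀ * A₀ᵀ = 1 := mul_eq_one_comm.mp hA₀.1
  have hv : A₀.mulVec ((A₀ᵀ * bdiag (fun _ => R2 t) * A₀).mulVec x)
      = (bdiag (fun _ => R2 t)).mulVec (A₀.mulVec x) := by
    rw [Matrix.mulVec_mulVec, Matrix.mulVec_mulVec, ← Matrix.mul_assoc, ← Matrix.mul_assoc,
      hAAT, Matrix.one_mul]
  unfold Wmat
  rw [Finset.mul_sum, Finset.sum_mul]
  refine Finset.sum_congr rfl fun i _ => ?_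
  have hblk : blk (A₀.mulVec ((A₀ᵀ * bdiag (fun _ => R2 t) * A₀).mulVec x)) i
      = (R2 t).mulVec (blk (A₀.mulVec x) i) := by
    rw [hv]
    exact blk_bdiag (fun _ => R2 t) (A₀.mulVec x) i
  rw [hblk, vecMulVec_mulVec, aeval_conj _ _ (R2_mul_transpose t) (transpose_mul_R2 t)]

/-- **Invariance of `ρ`.** With `W(x) = Σᵢ pᵢ(vᵢvᵢᵀ)`, `v = A₀x`, and
`ρ(x) = α·trace W(x) + β·(W(x)₁₂ − W(x)₂₁)`, the function `ρ` is invariant under the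
one-parameter subgroup `{A₀ᵀ(⊕ᵢ R(t))A₀ : t ∈ ℝ}`. -/
theorem stmt19 (M : ℕ) (A₀ : Matrix (Idx M) (Idx M) ℝ) (hA₀ : A₀ ∈ SOb M)
    (p : Fin M → Polynomial ℝ) (α β : ℝ)
    (ρ : (Idx M → ℝ) → ℝ)
    (hρ : ∀ x : Idx M → ℝ,
      ρ x = α * (Wmat A₀ p x).trace + β * (Wmat A₀ p x 0 1 - Wmat A₀ p x 1 0)) :
    ∀ (t : ℝ) (x : Idx M → ℝ),
      ρ ((A₀ᵀ * bdiag (fun _ => R2 t) * A₀).mulVec x) = ρ x := by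
  intro t x
  rw [hρ, hρ, Wmat_conj A₀ hA₀ p t x, conj_trace, conj_off]
end
end
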